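/- Let {X_t}_{t∈T} be a family of random variables and Q a family of probability measures on (Ω,F), all equivalent to P, and set E[·] := sup_{Q∈Q} E^Q[·]. Then lim_{N→∞} sup_{t∈T} E[|X_t| 1_{|X_t| ≥ N}] = 0 if and only if both: (a) sup_{t∈T} E[|X_t|] < ∞, and (b) for every ε > 0 there exists δ > 0 such that for every measurable set A with sup_{Q∈Q} Q[A] < δ one has sup_{t∈T} E[|X_t| 1_A] < ε. -/

import Mathlib

open MeasureTheory Filter Set ENNReal

/-- **Proposition A.1.** Characterization of uniform integrability under the sublinear
expectation `E[·] = sup_{Q ∈ 𝒬} E^Q[·]` associated with a family `𝒬` of probability measures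
all equivalent to `P`:
`lim_N sup_t E[|X_t| 1_{|X_t| ≥ N}] = 0` iff
(a) `sup_t E[|X_t|] < ∞`, and
(b) `∀ ε > 0, ∃ δ > 0` such that `sup_{Q} Q[A] < δ` implies `sup_t E[|X_t| 1_A] < ε`. -/
theorem uniform_integrability_characterization
    {Ω : Type*} {m0 : MeasurableSpace Ω} (P : Measure Ω) [IsProbabilityMeasure P]
    {ι : Type*} (𝒬 : Set (Measure Ω))
    (hprob : ∀ Q ∈ 𝒬, IsProbabilityMeasure Q)
    (hequiv : ∀ Q ∈ 𝒬, Q ≪ P ∧ P ≪ Q)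
    (X : ι → Ω → ℝ) (hmeas : ∀ t, Measurable (X t)) :
    Tendsto
      (fun N : ℝ => ⨆ t, ⨆ Q ∈ 𝒬,
        ∫⁻ ω in {ω | N ≤ |X t ω|}, ENNReal.ofReal |X t ω| ∂Q)
      atTop (nhds 0)
    ↔ ((⨆ t, ⨆ Q ∈ 𝒬, ∫⁻ ω, ENNReal.ofReal |X t ω| ∂Q) < ⊤
        ∧ ∀ ε : ℝ≥0∞, 0 < ε → ∃ δ : ℝ≥0∞, 0 < δ ∧
            ∀ A : Set Ω, MeasurableSet A → (⨆ Q ∈ 𝒬, Q A) < δ →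
              (⨆ t, ⨆ Q ∈ 𝒬, ∫⁻ ω in A, ENNReal.ofReal |X t ω| ∂Q) < ε) := by
  classical
  set F : ℝ → ℝ≥0∞ := fun N => ⨆ t, ⨆ Q ∈ 𝒬,
      ∫⁻ ω in {ω | N ≤ |X t ω|}, ENNReal.ofReal |X t ω| ∂Q with hF
  have hBmeas : ∀ (t : ι) (N : ℝ), MeasurableSet {ω | N ≤ |X t ω|} := fun t N =>
    measurableSet_le measurable_const (hmeas t).abs
  have hle : ∀ (t : ι) (Q : Measure Ω), Q ∈ 𝒬 → ∀ N : ℝ,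
      (∫⁻ ω in {ω | N ≤ |X t ω|}, ENNReal.ofReal |X t ω| ∂Q) ≤ F N := by
    intro t Q hQ N
    exact le_trans (le_iSup₂ (f := fun Q (_ : Q ∈ 𝒬) =>
      ∫⁻ ω in {ω | N ≤ |X t ω|}, ENNReal.ofReal |X t ω| ∂Q) Q hQ)
      (le_iSup (fun t => ⨆ Q ∈ 𝒬, ∫⁻ ω in {ω | N ≤ |X t ω|}, ENNReal.ofReal |X t ω| ∂Q) t)
  constructor
  · intro h
    rw [ENNReal.tendsto_nhds_zero] at h
    constructor
    · -- (a)
      obtain ⟨N, hN1, hNF⟩ := ((eventually_ge_atTop (1 : ℝ)).and (h 1 one_pos)).exists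
      have key : ∀ (t : ι) (Q : Measure Ω), Q ∈ 𝒬 →
          (∫⁻ ω, ENNReal.ofReal |X t ω| ∂Q) ≤ 1 + ENNReal.ofReal N := by
        intro t Q hQ
        haveI := hprob Q hQ
        rw [← lintegral_add_compl (fun ω => ENNReal.ofReal |X t ω|) (hBmeas t N)]
        refine add_le_add ((hle t Q hQ N).trans hNF) ?_
        calc (∫⁻ ω in {ω | N ≤ |X t ω|}ᶜ, ENNReal.ofReal |X t ω| ∂Q)
            ≤ ∫⁻ _ in {ω | N ≤ |X t ω|}ᶜ, ENNReal.ofReal N ∂Q := by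
              refine setLIntegral_mono measurable_const fun ω hω => ?_
              exact ENNReal.ofReal_le_ofReal (le_of_not_ge hω)
          _ = ENNReal.ofReal N * Q {ω | N ≤ |X t ω|}ᶜ := setLIntegral_const _ _
          _ ≤ ENNReal.ofReal N * 1 := by
              exact mul_le_mul_right prob_le_one _
          _ = ENNReal.ofReal N := mul_one _
      refine lt_of_le_of_lt (iSup_le fun t => iSup₂_le fun Q hQ => key t Q hQ) ?_
      exact ENNReal.add_lt_top.2 ⟨one_lt_top, ofReal_lt_top⟩
    · -- (b)
      intro ε hε
      set ε' : ℝ≥0∞ := min ε 1 with hε'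
      have hε'0 : 0 < ε' := lt_min hε one_pos
      have hε'top : ε' ≠ ⊤ := ne_top_of_le_ne_top one_ne_top (min_le_right _ _)
      have h4 : (0:ℝ≥0∞) < ε' / 4 := ENNReal.div_pos hε'0.ne' (by norm_num)
      obtain ⟨N, hN1, hNF⟩ := ((eventually_ge_atTop (1 : ℝ)).and (h (ε' / 4) h4)).exists
      have hN0 : ENNReal.ofReal N ≠ 0 := by
        simp [ENNReal.ofReal_eq_zero, not_le, lt_of_lt_of_le one_pos hN1]
      refine ⟨(ε' / 2) / ENNReal.ofReal N, ENNReal.div_pos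
        (by simp [ENNReal.div_eq_zero_iff, hε'0.ne', hε'top]) ofReal_ne_top, ?_⟩
      intro A hA hAδ
      have key : ∀ (t : ι) (Q : Measure Ω), Q ∈ 𝒬 →
          (∫⁻ ω in A, ENNReal.ofReal |X t ω| ∂Q)
            ≤ ε' / 4 + ENNReal.ofReal N * (⨆ Q ∈ 𝒬, Q A) := by
        intro t Q hQ
        have hsplit : (∫⁻ ω in A, ENNReal.ofReal |X t ω| ∂Q)
            = (∫⁻ ω in A ∩ {ω | N ≤ |X t ω|}, ENNReal.ofReal |X t ω| ∂Q)
              + ∫⁻ ω in A ∩ {ω | N ≤ |X t ω|}ᶜ, ENNReal.ofReal |X t ω| ∂Q := by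
          rw [← lintegral_union (hA.inter (hBmeas t N).compl)
            (Disjoint.mono inter_subset_right inter_subset_right disjoint_compl_right),
            inter_union_compl]
        rw [hsplit]
        refine add_le_add ?_ ?_
        · refine le_trans ?_ ((hle t Q hQ N).trans hNF)
          exact lintegral_mono_set inter_subset_right
        · calc (∫⁻ ω in A ∩ {ω | N ≤ |X t ω|}ᶜ, ENNReal.ofReal |X t ω| ∂Q)
              ≤ ∫⁻ _ in A ∩ {ω | N ≤ |X t ω|}ᶜ, ENNReal.ofReal N ∂Q := by
                refine setLIntegral_mono measurable_const fun ω hω => ?_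
                exact ENNReal.ofReal_le_ofReal (le_of_not_ge hω.2)
            _ = ENNReal.ofReal N * Q (A ∩ {ω | N ≤ |X t ω|}ᶜ) := setLIntegral_const _ _
            _ ≤ ENNReal.ofReal N * (⨆ Q ∈ 𝒬, Q A) := by
                refine mul_le_mul_right ?_ _
                exact le_trans (measure_mono inter_subset_left)
                  (le_iSup₂ (f := fun Q (_ : Q ∈ 𝒬) => Q A) Q hQ)
      refine lt_of_le_of_lt (iSup_le fun t => iSup₂_le fun Q hQ => key t Q hQ) ?_
      have h1 : ENNReal.ofReal N * (⨆ Q ∈ 𝒬, Q A) < ε' / 2 := by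
        calc ENNReal.ofReal N * (⨆ Q ∈ 𝒬, Q A)
            < ENNReal.ofReal N * ((ε' / 2) / ENNReal.ofReal N) :=
              ENNReal.mul_lt_mul_right hN0 ofReal_ne_top hAδ
          _ = ε' / 2 := ENNReal.mul_div_cancel hN0 ofReal_ne_top
      calc ε' / 4 + ENNReal.ofReal N * (⨆ Q ∈ 𝒬, Q A)
          < ε' / 4 + ε' / 2 := ENNReal.add_lt_add_left (ne_top_of_le_ne_top hε'top (ENNReal.div_le_of_le_mul (le_mul_of_one_le_right' (by norm_num)))) h1
        _ ≤ ε' / 2 + ε' / 2 := add_le_add_left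
            (ENNReal.div_le_div_left (by norm_num) _) _
        _ = ε' := ENNReal.add_halves _
        _ ≤ ε := min_le_left _ _
  · rintro ⟨ha, hb⟩
    rw [ENNReal.tendsto_nhds_zero]
    intro ε hε
    obtain ⟨δ, hδ0, hδ⟩ := hb ε hε
    obtain ⟨r, hr0, hrδ⟩ : ∃ r : ℝ, 0 < r ∧ ENNReal.ofReal r < δ := by
      rcases ENNReal.lt_iff_exists_real_btwn.1 hδ0 with ⟨r, _, hr1, hr2⟩
      exact ⟨r, by simpa [ENNReal.ofReal_pos] using hr1, hr2⟩
    set M : ℝ≥0∞ := ⨆ t, ⨆ Q ∈ 𝒬, ∫⁻ ω, ENNReal.ofReal |X t ω| ∂Q with hM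
    filter_upwards [eventually_ge_atTop (M.toReal / r + 1)] with N hN
    refine iSup_le fun t => iSup₂_le fun Q hQ => ?_
    have hN0 : (0:ℝ) < N := lt_of_lt_of_le (by positivity) hN
    -- the small-probability set
    have hsmall : (⨆ Q ∈ 𝒬, Q {ω | N ≤ |X t ω|}) < δ := by
      refine lt_of_le_of_lt (iSup₂_le fun Q' hQ' => ?_) hrδ
      have markov : Q' {ω | N ≤ |X t ω|}
          ≤ (∫⁻ ω, ENNReal.ofReal |X t ω| ∂Q') / ENNReal.ofReal N := by
        have : {ω | N ≤ |X t ω|} = {ω | ENNReal.ofReal N ≤ ENNReal.ofReal |X t ω|} := by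
          ext ω; simp [ENNReal.ofReal_le_ofReal_iff (abs_nonneg _)]
        rw [this]
        exact meas_ge_le_lintegral_div ((hmeas t).abs.ennreal_ofReal).aemeasurable
          (by simpa [ENNReal.ofReal_eq_zero, not_le] using hN0) ofReal_ne_top
      refine markov.trans ?_
      have hle' : (∫⁻ ω, ENNReal.ofReal |X t ω| ∂Q') ≤ M :=
        le_trans (le_iSup₂ (f := fun Q (_ : Q ∈ 𝒬) => ∫⁻ ω, ENNReal.ofReal |X t ω| ∂Q) Q' hQ')
          (le_iSup (fun t => ⨆ Q ∈ 𝒬, ∫⁻ ω, ENNReal.ofReal |X t ω| ∂Q) t)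
      refine le_trans (ENNReal.div_le_div_right hle' _) ?_
      rw [ENNReal.div_le_iff (by simpa [ENNReal.ofReal_eq_zero, not_le] using hN0) ofReal_ne_top,
        ← ENNReal.ofReal_mul (le_of_lt hr0)]
      calc M = ENNReal.ofReal M.toReal := (ENNReal.ofReal_toReal ha.ne).symm
        _ ≤ ENNReal.ofReal (r * N) := by
            refine ENNReal.ofReal_le_ofReal ?_
            rw [← div_le_iff₀' hr0]
            linarith
    have := hδ _ (hBmeas t N) hsmall
    refine le_of_lt (lt_of_le_of_lt ?_ this)
    exact le_trans (le_iSup₂ (f := fun Q (_ : Q ∈ 𝒬) =>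
        ∫⁻ ω in {ω | N ≤ |X t ω|}, ENNReal.ofReal |X t ω| ∂Q) Q hQ)
      (le_iSup (fun s => ⨆ Q ∈ 𝒬, ∫⁻ ω in {ω | N ≤ |X t ω|}, ENNReal.ofReal |X s ω| ∂Q) t)
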